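/- Let s ∈ (0,1) and r ∈ [0, 2−2s]. There exists a constant C = C(r,s) > 0 such that for all λ > 0, all Δt > 0 and every positive integer N, setting T := NΔt, t_j := jΔt and φ(t) := e^{−λt}, the piecewise-constant interpolant I[φ] of φ on the uniform grid satisfies |∫_0^T (I[φ](t) − φ(t)) t^{s−1} dt| ≤ C · λ^{r/2} · Δt^{s + r/2}. The constant C is independent of λ, Δt and N. -/

import Mathlib

open Real MeasureTheory intervalIntegral

/-- The piecewise-constant interpolant of `φ` on the uniform grid `t_j = jΔt`:
`I[φ](t) = φ(t_j)` for `t ∈ [t_j, t_{j+1})`. -/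
noncomputable def pcInterp (Δt : ℝ) (φ : ℝ → ℝ) (t : ℝ) : ℝ :=
  φ ((⌊t / Δt⌋₊ : ℝ) * Δt)

open Set


lemma min_le_rpow' {x θ : ℝ} (hx : 0 < x) (h0 : 0 ≤ θ) (h1 : θ ≤ 1) : min 1 x ≤ x ^ θ := by
  rcases le_total x 1 with h | h
  · calc min 1 x ≤ x := min_le_right _ _
      _ = x ^ (1:ℝ) := (Real.rpow_one x).symm
      _ ≤ x ^ θ := Real.rpow_le_rpow_of_exponent_ge hx h h1
  · calc min 1 x ≤ 1 := min_le_left _ _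
      _ = x ^ (0:ℝ) := (Real.rpow_zero x).symm
      _ ≤ x ^ θ := Real.rpow_le_rpow_of_exponent_le h h0

lemma pc_pointwise {s lam Δt t : ℝ} (hlam : 0 < lam) (hΔt : 0 < Δt) (ht : 0 < t) :
    |(pcInterp Δt (fun u => Real.exp (-lam * u)) t - Real.exp (-lam * t)) * t ^ (s-1)|
      ≤ min 1 (lam*Δt) * (Real.exp (-(lam * max (t - Δt) 0)) * t ^ (s-1)) := by
  set j : ℝ := (⌊t / Δt⌋₊ : ℝ) with hj
  have hj0 : 0 ≤ j := Nat.cast_nonneg _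
  have htj0 : 0 ≤ j * Δt := by positivity
  have htjle : j * Δt ≤ t := by
    have h1 : j ≤ t / Δt := Nat.floor_le (by positivity)
    calc j * Δt ≤ (t / Δt) * Δt := by nlinarith
      _ = t := div_mul_cancel₀ t hΔt.ne'
  have htlt : t < j * Δt + Δt := by
    have h1 : t / Δt < j + 1 := Nat.lt_floor_add_one _
    have := (div_lt_iff₀ hΔt).mp h1
    nlinarith
  have hmax : max (t - Δt) 0 ≤ j * Δt := max_le (by linarith) htj0
  have hpc : pcInterp Δt (fun u => Real.exp (-lam * u)) t = Real.exp (-lam * (j * Δt)) := rfl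
  rw [hpc]
  have hEle : Real.exp (-lam * t) ≤ Real.exp (-lam * (j * Δt)) :=
    Real.exp_le_exp.mpr (by nlinarith)
  rw [abs_mul, abs_of_nonneg (by linarith : (0:ℝ) ≤ Real.exp (-lam * (j*Δt)) - Real.exp (-lam*t)),
    abs_of_nonneg (Real.rpow_nonneg ht.le _)]
  have key : Real.exp (-lam * (j*Δt)) - Real.exp (-lam*t)
      ≤ min 1 (lam*Δt) * Real.exp (-(lam * max (t - Δt) 0)) := by
    have hfac : Real.exp (-lam * t)
        = Real.exp (-lam * (j*Δt)) * Real.exp (-(lam * (t - j*Δt))) := by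
      rw [← Real.exp_add]; ring_nf
    rw [hfac]
    have hE2 : Real.exp (-lam * (j*Δt)) ≤ Real.exp (-(lam * max (t - Δt) 0)) :=
      Real.exp_le_exp.mpr (by nlinarith)
    have hF1 : Real.exp (-(lam * (t - j*Δt))) ≤ 1 :=
      Real.exp_le_one_iff.mpr (by nlinarith)
    have hFmin : 1 - Real.exp (-(lam * (t - j*Δt))) ≤ min 1 (lam*Δt) := by
      refine le_min (by nlinarith [Real.exp_pos (-(lam * (t - j*Δt)))]) ?_
      have h1 : -(lam * (t - j*Δt)) + 1 ≤ Real.exp (-(lam * (t - j*Δt))) :=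
        Real.add_one_le_exp _
      nlinarith
    have : Real.exp (-lam * (j*Δt)) - Real.exp (-lam * (j*Δt)) * Real.exp (-(lam * (t - j*Δt)))
        = Real.exp (-lam * (j*Δt)) * (1 - Real.exp (-(lam * (t - j*Δt)))) := by ring
    rw [this]
    calc Real.exp (-lam * (j*Δt)) * (1 - Real.exp (-(lam * (t - j*Δt))))
        ≤ Real.exp (-(lam * max (t - Δt) 0)) * min 1 (lam*Δt) :=
          mul_le_mul hE2 hFmin (by linarith) (Real.exp_pos _).le
      _ = min 1 (lam*Δt) * Real.exp (-(lam * max (t - Δt) 0)) := mul_comm _ _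
  calc (Real.exp (-lam * (j*Δt)) - Real.exp (-lam*t)) * t ^ (s-1)
      ≤ (min 1 (lam*Δt) * Real.exp (-(lam * max (t - Δt) 0))) * t ^ (s-1) :=
        mul_le_mul_of_nonneg_right key (Real.rpow_nonneg ht.le _)
    _ = min 1 (lam*Δt) * (Real.exp (-(lam * max (t - Δt) 0)) * t ^ (s-1)) := mul_assoc _ _ _


lemma gammaInt {s lam : ℝ} (hs0 : 0 < s) (hlam : 0 < lam) :
    IntegrableOn (fun x : ℝ => x ^ (s-1) * Real.exp (-(lam*x))) (Ioi 0) := by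
  have h := integrableOn_rpow_mul_exp_neg_mul_rpow (p := 1) (s := s - 1) (b := lam)
    (by linarith) zero_lt_one hlam
  refine h.congr_fun (fun x hx => ?_) measurableSet_Ioi
  dsimp only
  rw [Real.rpow_one, neg_mul]

lemma kMeasurable (s lam Δt : ℝ) :
    Measurable (fun t : ℝ => Real.exp (-(lam * max (t - Δt) 0)) * t ^ (s-1)) := by
  measurability

lemma kIntegrable {s lam Δt : ℝ} (hs0 : 0 < s) (hlam : 0 < lam) (hΔt : 0 < Δt) :
    IntegrableOn (fun t => Real.exp (-(lam * max (t - Δt) 0)) * t ^ (s-1)) (Ioi 0) := by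
  have hG := (gammaInt hs0 hlam).const_mul (Real.exp (lam * Δt))
  refine Integrable.mono' hG ((kMeasurable s lam Δt).aestronglyMeasurable.restrict) ?_
  filter_upwards [ae_restrict_mem measurableSet_Ioi] with t ht
  have ht0 : (0:ℝ) < t := ht
  rw [Real.norm_eq_abs, abs_of_nonneg (by positivity)]
  have h1 : Real.exp (-(lam * max (t - Δt) 0)) ≤ Real.exp (lam * Δt) * Real.exp (-(lam * t)) := by
    rw [← Real.exp_add]
    apply Real.exp_le_exp.mpr
    rcases le_total (t - Δt) 0 with h | h
    · rw [max_eq_right h]; nlinarith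
    · rw [max_eq_left h]; nlinarith
  calc Real.exp (-(lam * max (t - Δt) 0)) * t ^ (s-1)
      ≤ (Real.exp (lam * Δt) * Real.exp (-(lam * t))) * t ^ (s-1) :=
        mul_le_mul_of_nonneg_right h1 (Real.rpow_nonneg ht0.le _)
    _ = Real.exp (lam * Δt) * (t ^ (s-1) * Real.exp (-(lam * t))) := by ring

lemma kInt1 {s lam Δt : ℝ} (hs0 : 0 < s) (hΔt : 0 < Δt) :
    ∫ t in Ioc 0 Δt, Real.exp (-(lam * max (t - Δt) 0)) * t ^ (s-1) = Δt ^ s / s := by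
  have h1 : ∫ t in Ioc 0 Δt, Real.exp (-(lam * max (t - Δt) 0)) * t ^ (s-1)
      = ∫ t in Ioc 0 Δt, t ^ (s-1) := by
    refine setIntegral_congr_fun measurableSet_Ioc (fun t ht => ?_)
    rw [max_eq_right (by linarith [ht.2]), mul_zero, neg_zero, Real.exp_zero, one_mul]
  rw [h1, ← intervalIntegral.integral_of_le hΔt.le,
    integral_rpow (Or.inl (by linarith : (-1:ℝ) < s - 1))]
  rw [sub_add_cancel, Real.zero_rpow hs0.ne', sub_zero]

lemma kInt2 {s lam Δt : ℝ} (hs0 : 0 < s) (hs1 : s < 1) (hlam : 0 < lam) (hΔt : 0 < Δt) :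
    ∫ t in Ioi Δt, Real.exp (-(lam * max (t - Δt) 0)) * t ^ (s-1)
      ≤ (1/lam) ^ s * Real.Gamma s := by
  have hshift : ∫ t in Ioi Δt, Real.exp (-(lam * max (t - Δt) 0)) * t ^ (s-1)
      = ∫ u in Ioi (0:ℝ), Real.exp (-(lam * max u 0)) * (u + Δt) ^ (s-1) := by
    rw [← (measurePreserving_add_right volume Δt).setIntegral_preimage_emb
      (measurableEmbedding_addRight Δt)
      (fun t => Real.exp (-(lam * max (t - Δt) 0)) * t ^ (s-1)) (Ioi Δt)]
    have hpre : (· + Δt) ⁻¹' (Ioi Δt) = Ioi (0:ℝ) := by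
      ext x; simp [Set.mem_preimage]
    rw [hpre]
    simp only [add_sub_cancel_right]
  rw [hshift, ← Real.integral_rpow_mul_exp_neg_mul_Ioi hs0 hlam]
  refine integral_mono_of_nonneg ?_ (gammaInt hs0 hlam) ?_
  · filter_upwards [ae_restrict_mem measurableSet_Ioi] with u hu
    have : (0:ℝ) < u + Δt := by have : (0:ℝ) < u := hu; linarith
    positivity
  · filter_upwards [ae_restrict_mem measurableSet_Ioi] with u hu
    have hu0 : (0:ℝ) < u := hu
    rw [max_eq_left hu0.le]
    calc Real.exp (-(lam * u)) * (u + Δt) ^ (s-1)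
        ≤ Real.exp (-(lam * u)) * u ^ (s-1) :=
          mul_le_mul_of_nonneg_left
            (Real.rpow_le_rpow_of_nonpos hu0 (by linarith) (by linarith)) (Real.exp_pos _).le
      _ = u ^ (s-1) * Real.exp (-(lam * u)) := mul_comm _ _

/-- Let `s ∈ (0,1)` and `r ∈ [0, 2−2s]`. There exists `C = C(r,s) > 0` such
that for all `λ > 0`, `Δt > 0` and every positive integer `N`, setting `T = NΔt` and
`φ(t) = e^{−λt}`, the piecewise-constant interpolant `I[φ]` of `φ` on the uniform grid
satisfies `|∫_0^T (I[φ](t) − φ(t)) t^{s−1} dt| ≤ C λ^{r/2} Δt^{s+r/2}`. -/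
theorem stmt3 (s r : ℝ) (hs : s ∈ Set.Ioo (0:ℝ) 1) (hr : r ∈ Set.Icc (0:ℝ) (2 - 2*s)) :
    ∃ C : ℝ, 0 < C ∧ ∀ lam Δt : ℝ, 0 < lam → 0 < Δt → ∀ N : ℕ, 0 < N →
      |∫ t in (0:ℝ)..((N:ℝ) * Δt),
          (pcInterp Δt (fun u => Real.exp (-lam * u)) t - Real.exp (-lam * t)) * t ^ (s - 1)|
        ≤ C * lam ^ (r / 2) * Δt ^ (s + r / 2) := by
  obtain ⟨hs0, hs1⟩ := hs
  obtain ⟨hr0, hr1⟩ := hr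
  refine ⟨1/s + Real.Gamma s, by positivity, ?_⟩
  intro lam Δt hlam hΔt N hN
  set T : ℝ := (N:ℝ) * Δt with hT
  have hT0 : 0 ≤ T := by positivity
  set f : ℝ → ℝ := fun t =>
    (pcInterp Δt (fun u => Real.exp (-lam * u)) t - Real.exp (-lam * t)) * t ^ (s - 1) with hf
  set k : ℝ → ℝ := fun t => Real.exp (-(lam * max (t - Δt) 0)) * t ^ (s-1) with hk
  set m : ℝ := min 1 (lam * Δt) with hmdef
  have hm0 : 0 ≤ m := le_min zero_le_one (by positivity)
  have hkint : IntegrableOn k (Ioi 0) := kIntegrable hs0 hlam hΔt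
  -- step 1
  have step1 : |∫ t in (0:ℝ)..T, f t| ≤ ∫ t in Ioc 0 T, |f t| := by
    have h1 := intervalIntegral.norm_integral_le_abs_integral_norm
      (f := f) (a := (0:ℝ)) (b := T) (μ := volume)
    rw [Real.norm_eq_abs] at h1
    refine h1.trans (le_of_eq ?_)
    rw [intervalIntegral.integral_of_le hT0]
    simp only [Real.norm_eq_abs]
    exact abs_of_nonneg (setIntegral_nonneg measurableSet_Ioc (fun x _ => abs_nonneg _))
  -- step 2
  have step2 : ∫ t in Ioc 0 T, |f t| ≤ ∫ t in Ioc 0 T, m * k t := by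
    refine integral_mono_of_nonneg (Filter.Eventually.of_forall fun t => abs_nonneg _)
      (((hkint.mono_set Set.Ioc_subset_Ioi_self).const_mul m)) ?_
    filter_upwards [ae_restrict_mem measurableSet_Ioc] with t ht
    exact pc_pointwise hlam hΔt ht.1
  -- step 3
  have step3 : ∫ t in Ioc 0 T, m * k t ≤ ∫ t in Ioi 0, m * k t := by
    refine setIntegral_mono_set (hkint.const_mul m) ?_
      (HasSubset.Subset.eventuallyLE Set.Ioc_subset_Ioi_self)
    filter_upwards [ae_restrict_mem measurableSet_Ioi] with t ht
    have ht0 : (0:ℝ) < t := ht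
    have : 0 ≤ k t := by
      simp only [hk]; positivity
    positivity
  -- step 4 : split
  have hsplit : ∫ t in Ioi 0, k t = (∫ t in Ioc 0 Δt, k t) + ∫ t in Ioi Δt, k t := by
    rw [← setIntegral_union (Set.Ioc_disjoint_Ioi le_rfl) measurableSet_Ioi
      (hkint.mono_set Set.Ioc_subset_Ioi_self)
      (hkint.mono_set (Set.Ioi_subset_Ioi hΔt.le)), Set.Ioc_union_Ioi_eq_Ioi hΔt.le]
  have step4 : ∫ t in Ioi 0, m * k t ≤ m * (Δt ^ s / s) + m * ((1/lam) ^ s * Real.Gamma s) := by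
    rw [MeasureTheory.integral_const_mul, hsplit, mul_add]
    have h2 := kInt2 (lam := lam) (Δt := Δt) hs0 hs1 hlam hΔt
    rw [kInt1 hs0 hΔt (lam := lam)]
    exact add_le_add le_rfl (mul_le_mul_of_nonneg_left h2 hm0)
  -- step 5 : min bounds
  have hx : 0 < lam * Δt := by positivity
  have hmin1 : m ≤ (lam * Δt) ^ (r/2) := min_le_rpow' hx (by linarith) (by linarith)
  have hmin2 : m ≤ (lam * Δt) ^ (s + r/2) := min_le_rpow' hx (by linarith) (by linarith)
  have hterm1 : m * (Δt ^ s / s) ≤ (1/s) * (lam ^ (r/2) * Δt ^ (s + r/2)) := by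
    have h1 : m * (Δt ^ s / s) ≤ (lam * Δt) ^ (r/2) * (Δt ^ s / s) :=
      mul_le_mul_of_nonneg_right hmin1 (by positivity)
    refine h1.trans (le_of_eq ?_)
    rw [Real.mul_rpow hlam.le hΔt.le, Real.rpow_add hΔt]
    ring
  have hterm2 : m * ((1/lam) ^ s * Real.Gamma s)
      ≤ Real.Gamma s * (lam ^ (r/2) * Δt ^ (s + r/2)) := by
    have h1 : m * ((1/lam) ^ s * Real.Gamma s)
        ≤ (lam * Δt) ^ (s + r/2) * ((1/lam) ^ s * Real.Gamma s) :=
      mul_le_mul_of_nonneg_right hmin2 (by positivity)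
    refine h1.trans (le_of_eq ?_)
    rw [Real.mul_rpow hlam.le hΔt.le, Real.rpow_add hlam, Real.div_rpow zero_le_one hlam.le,
      Real.one_rpow]
    have := (Real.rpow_pos_of_pos hlam s).ne'
    field_simp
  calc |∫ t in (0:ℝ)..T, f t| ≤ ∫ t in Ioc 0 T, |f t| := step1
    _ ≤ ∫ t in Ioc 0 T, m * k t := step2
    _ ≤ ∫ t in Ioi 0, m * k t := step3
    _ ≤ m * (Δt ^ s / s) + m * ((1/lam) ^ s * Real.Gamma s) := step4
    _ ≤ (1/s) * (lam ^ (r/2) * Δt ^ (s + r/2)) + Real.Gamma s * (lam ^ (r/2) * Δt ^ (s + r/2)) :=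
      add_le_add hterm1 hterm2
    _ = (1/s + Real.Gamma s) * lam ^ (r/2) * Δt ^ (s + r/2) := by ring
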